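/- On the hyperboloid model H = {(x,y,z) ∈ ℝ³ : z² - x² - y² = 1, z > 0}, given points p₁,...,pₙ ∈ H, the point c = π_H((p₁+⋯+pₙ)/n), where π_H is the radial projection onto H (scaling by the positive factor making the Minkowski norm -1), is the unique point of H satisfying ∑_{k=1}^n sinh(d_H(c,p_k))·e(c,p_k) = 0, where d_H is hyperbolic distance and e(c,p_k) is the unit tangent vector at c pointing toward p_k. -/

import Mathlib

open Finset

/-- The Minkowski bilinear form `⟨u,v⟩ = u₁v₁ + u₂v₂ - u₃v₃` on `ℝ³`. -/
def mink (u v : Fin 3 → ℝ) : ℝ := u 0 * v 0 + u 1 * v 1 - u 2 * v 2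

/-- The hyperboloid model `H = {(x,y,z) : z² - x² - y² = 1, z > 0}`. -/
def Hyp : Set (Fin 3 → ℝ) := {p | mink p p = -1 ∧ 0 < p 2}

/-- The inverse hyperbolic cosine, `arcosh x = log (x + √(x²-1))` for `x ≥ 1`. -/
noncomputable def arcosh (x : ℝ) : ℝ := Real.log (x + Real.sqrt (x ^ 2 - 1))

/-- Hyperbolic distance on the hyperboloid: `cosh d(p,q) = -⟨p,q⟩`. -/
noncomputable def dH (p q : Fin 3 → ℝ) : ℝ := arcosh (-(mink p q))

/-- The unit tangent vector at `c` pointing toward `p` (junk value `0` if `p = c`). -/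
noncomputable def unitTangent (c p : Fin 3 → ℝ) : Fin 3 → ℝ :=
  (Real.sinh (dH c p))⁻¹ • (p + mink c p • c)

/-- The radial projection onto the hyperboloid, `π_H(v) = v/√(-⟨v,v⟩)`. -/
noncomputable def projH (v : Fin 3 → ℝ) : Fin 3 → ℝ :=
  (Real.sqrt (-(mink v v)))⁻¹ • v

lemma mink_comm (u v : Fin 3 → ℝ) : mink u v = mink v u := by simp [mink]; ring

lemma mink_smul_right (a : ℝ) (u v : Fin 3 → ℝ) : mink u (a • v) = a * mink u v := by
  simp [mink]; ring

lemma mink_smul_left (a : ℝ) (u v : Fin 3 → ℝ) : mink (a • u) v = a * mink u v := by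
  simp [mink]; ring

lemma mink_sum_right {ι : Type*} (u : Fin 3 → ℝ) (s : Finset ι) (f : ι → Fin 3 → ℝ) :
    mink u (∑ k ∈ s, f k) = ∑ k ∈ s, mink u (f k) := by
  simp only [mink, Finset.sum_apply, Finset.mul_sum, ← Finset.sum_add_distrib,
    ← Finset.sum_sub_distrib]

lemma hyp_mink_le {p q : Fin 3 → ℝ} (hp : p ∈ Hyp) (hq : q ∈ Hyp) : mink p q ≤ -1 := by
  obtain ⟨hp1, hp2⟩ := hp; obtain ⟨hq1, hq2⟩ := hq
  simp only [mink] at *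
  nlinarith [sq_nonneg (p 0 - q 0), sq_nonneg (p 1 - q 1), sq_nonneg (p 0 * q 1 - p 1 * q 0),
    mul_pos hp2 hq2, sq_nonneg (p 2 - q 2), sq_nonneg (p 2 + q 2)]

lemma hyp_mink_eq {p q : Fin 3 → ℝ} (hp : p ∈ Hyp) (hq : q ∈ Hyp)
    (h : mink p q = -1) : p = q := by
  obtain ⟨hp1, hp2⟩ := hp; obtain ⟨hq1, hq2⟩ := hq
  simp only [mink] at *
  have key : (p 0 - q 0) ^ 2 + (p 1 - q 1) ^ 2 + (p 0 * q 1 - p 1 * q 0) ^ 2 = 0 := by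
    nlinarith [hp1, hq1, h, sq_nonneg (p 2 * q 2)]
  have h0 : p 0 = q 0 := by nlinarith [sq_nonneg (p 1 - q 1), sq_nonneg (p 0 * q 1 - p 1 * q 0)]
  have h1 : p 1 = q 1 := by nlinarith [sq_nonneg (p 0 - q 0), sq_nonneg (p 0 * q 1 - p 1 * q 0)]
  have h2 : p 2 = q 2 := by nlinarith
  funext i; fin_cases i <;> assumption

lemma sinh_arcosh {x : ℝ} (hx : 1 ≤ x) : Real.sinh (arcosh x) = Real.sqrt (x ^ 2 - 1) := by
  have h1 : (0:ℝ) ≤ x ^ 2 - 1 := by nlinarith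
  set s := Real.sqrt (x ^ 2 - 1) with hs_def
  have hs : 0 ≤ s := Real.sqrt_nonneg _
  have hs2 : s ^ 2 = x ^ 2 - 1 := Real.sq_sqrt h1
  have hpos : 0 < x + s := by linarith
  have hinv : (x + s)⁻¹ = x - s :=
    inv_eq_of_mul_eq_one_right (by nlinarith)
  rw [arcosh, Real.sinh_eq, Real.exp_log hpos, Real.exp_neg, Real.exp_log hpos, hinv]
  ring

lemma term_eq {c p : Fin 3 → ℝ} (hc : c ∈ Hyp) (hp : p ∈ Hyp) :
    Real.sinh (dH c p) • unitTangent c p = p + mink c p • c := by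
  by_cases h : mink c p = -1
  · have hpc : p = c := (hyp_mink_eq hc hp h).symm
    subst hpc
    rw [unitTangent, h, neg_one_smul, add_neg_cancel]
    simp
  · have hlt : mink c p < -1 := lt_of_le_of_ne (hyp_mink_le hc hp) h
    have h1 : (1:ℝ) ≤ -(mink c p) := by linarith
    have hsinh : Real.sinh (dH c p) = Real.sqrt ((-(mink c p)) ^ 2 - 1) := sinh_arcosh h1
    have hne : Real.sinh (dH c p) ≠ 0 := by
      rw [hsinh]
      exact ne_of_gt (Real.sqrt_pos.mpr (by nlinarith))
    rw [unitTangent, smul_smul, mul_inv_cancel₀ hne, one_smul]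

/-- For points `p₁,…,pₙ` on the hyperboloid `H`, the point
`c = π_H((p₁+⋯+pₙ)/n)` lies on `H` and is the unique point of `H` satisfying
the balance condition `∑ₖ sinh(d_H(c,pₖ)) • e(c,pₖ) = 0`. -/
theorem cosh_center_of_mass_balance
    (n : ℕ) (hn : 0 < n) (p : Fin n → (Fin 3 → ℝ)) (hp : ∀ k, p k ∈ Hyp)
    (c : Fin 3 → ℝ) (hc : c = projH ((n : ℝ)⁻¹ • ∑ k, p k)) :
    c ∈ Hyp ∧
    (∑ k, Real.sinh (dH c (p k)) • unitTangent c (p k)) = 0 ∧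
    (∀ c' ∈ Hyp,
      (∑ k, Real.sinh (dH c' (p k)) • unitTangent c' (p k)) = 0 → c' = c) := by
  set S : Fin 3 → ℝ := ∑ k, p k with hS_def
  have hne : (Finset.univ : Finset (Fin n)).Nonempty := Finset.univ_nonempty_iff.mpr
    (Fin.pos_iff_nonempty.mp hn)
  have hnR : (0:ℝ) < (n:ℝ) := by exact_mod_cast hn
  -- sum rewriting for any point of Hyp
  have hsum : ∀ c0 ∈ Hyp, (∑ k, Real.sinh (dH c0 (p k)) • unitTangent c0 (p k))
      = S + mink c0 S • c0 := by
    intro c0 hc0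
    calc (∑ k, Real.sinh (dH c0 (p k)) • unitTangent c0 (p k))
        = ∑ k, (p k + mink c0 (p k) • c0) :=
          Finset.sum_congr rfl fun k _ => term_eq hc0 (hp k)
      _ = S + (∑ k, mink c0 (p k)) • c0 := by
          rw [Finset.sum_add_distrib, Finset.sum_smul]
      _ = S + mink c0 S • c0 := by rw [hS_def, mink_sum_right]
  -- bound on mink c0 S for c0 ∈ Hyp
  have hminkS : ∀ c0 ∈ Hyp, mink c0 S ≤ -(n:ℝ) := by
    intro c0 hc0
    rw [hS_def, mink_sum_right]
    calc (∑ k, mink c0 (p k)) ≤ ∑ _k : Fin n, (-1 : ℝ) :=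
          Finset.sum_le_sum fun k _ => hyp_mink_le hc0 (hp k)
      _ = -(n:ℝ) := by simp
  -- S is timelike future
  have hS2 : 0 < S 2 := by
    rw [hS_def, Finset.sum_apply]
    exact Finset.sum_pos (fun k _ => (hp k).2) hne
  have hSS : mink S S ≤ -((n:ℝ) * (n:ℝ)) := by
    rw [hS_def, mink_sum_right]
    calc (∑ k, mink (∑ j, p j) (p k)) ≤ ∑ _k : Fin n, (-(n:ℝ)) := by
          refine Finset.sum_le_sum fun k _ => ?_
          rw [mink_comm, mink_sum_right]
          calc (∑ j, mink (p k) (p j)) ≤ ∑ _j : Fin n, (-1:ℝ) :=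
                Finset.sum_le_sum fun j _ => hyp_mink_le (hp k) (hp j)
            _ = -(n:ℝ) := by simp
      _ = -((n:ℝ) * (n:ℝ)) := by simp
  set m : ℝ := -(mink S S) with hm_def
  have hm : 0 < m := by rw [hm_def]; nlinarith
  have hsm : 0 < Real.sqrt m := Real.sqrt_pos.mpr hm
  have hkey : (Real.sqrt m)⁻¹ * ((Real.sqrt m)⁻¹ * m) = 1 := by
    rw [← Real.mul_self_sqrt hm.le]
    field_simp
    rw [Real.sqrt_sq hsm.le]
  -- c = (√m)⁻¹ • S
  have hcS : c = (Real.sqrt m)⁻¹ • S := by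
    rw [hc, projH, mink_smul_right, mink_smul_left]
    have : -((n:ℝ)⁻¹ * ((n:ℝ)⁻¹ * mink S S)) = (n:ℝ)⁻¹ ^ 2 * m := by
      rw [hm_def]; ring
    rw [this, Real.sqrt_mul (by positivity), Real.sqrt_sq (by positivity), smul_smul]
    congr 1
    rw [mul_inv, inv_inv]
    field_simp
  have hcHyp : c ∈ Hyp := by
    constructor
    · rw [hcS, mink_smul_right, mink_smul_left]
      have : mink S S = -m := by rw [hm_def]; ring
      rw [this]
      nlinarith [hkey]
    · rw [hcS]
      have : ((Real.sqrt m)⁻¹ • S) 2 = (Real.sqrt m)⁻¹ * S 2 := rfl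
      rw [this]
      positivity
  refine ⟨hcHyp, ?_, ?_⟩
  · rw [hsum c hcHyp, hcS, mink_smul_left, smul_smul]
    have hmS : mink S S = -m := by rw [hm_def]; ring
    have : (Real.sqrt m)⁻¹ * mink S S * (Real.sqrt m)⁻¹ = -1 := by
      rw [hmS]; nlinarith [hkey]
    rw [this, neg_one_smul, add_neg_cancel]
  · intro c' hc' hbal
    rw [hsum c' hc'] at hbal
    set t : ℝ := -(mink c' S) with ht_def
    have ht : 0 < t := by have := hminkS c' hc'; rw [ht_def]; linarith
    have hSt : S = t • c' := by
      have h2 : S = -(mink c' S • c') := eq_neg_of_add_eq_zero_left hbal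
      rw [h2, ← neg_smul, ← ht_def]
    have hmt : m = t * t := by
      have : mink S S = t * (t * mink c' c') := by
        rw [hSt, mink_smul_left, mink_smul_right]
      rw [hm_def, this, hc'.1]; ring
    have hst : Real.sqrt m = t := by rw [hmt, Real.sqrt_mul_self ht.le]
    rw [hcS, hst, hSt, smul_smul, inv_mul_cancel₀ ht.ne', one_smul]
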